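/- Let a > 0 and b be real numbers, and let n be an odd natural number. Then ∫_{-∞}^{∞} |λ| λⁿ e^{-aλ² + 2bλ} dλ = 2b · a^{-(n+3)/2} · Γ((n+3)/2) · ₁F₁((n+3)/2, 3/2, b²/a). -/

import Mathlib

open MeasureTheory Set Filter

set_option maxHeartbeats 1000000

/-- Half-integer Gaussian moment. -/
lemma gauss_moment {a : ℝ} (ha : 0 < a) (K : ℕ) :
    ∫ x in Ioi (0:ℝ), x ^ K * Real.exp (-a * x ^ 2)
      = (1/a) ^ (((K:ℝ)+1)/2) * Real.Gamma (((K:ℝ)+1)/2) / 2 := by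
  have h1 : 0 < ((K:ℝ)+1)/2 := by positivity
  set g : ℝ → ℝ := fun t => t ^ (((K:ℝ)+1)/2 - 1) * Real.exp (-(a * t)) with hg
  have key : ∫ x in Ioi (0:ℝ), ((2:ℝ) * x ^ ((2:ℝ) - 1)) • g (x ^ (2:ℝ))
      = (1/a) ^ (((K:ℝ)+1)/2) * Real.Gamma (((K:ℝ)+1)/2) := by
    rw [integral_comp_rpow_Ioi_of_pos (two_pos)]
    exact Real.integral_rpow_mul_exp_neg_mul_Ioi h1 ha
  have congr1 : ∫ x in Ioi (0:ℝ), ((2:ℝ) * x ^ ((2:ℝ) - 1)) • g (x ^ (2:ℝ))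
      = ∫ x in Ioi (0:ℝ), 2 * (x ^ K * Real.exp (-a * x ^ 2)) := by
    refine setIntegral_congr_fun measurableSet_Ioi (fun x hx => ?_)
    have hx0 : (0:ℝ) < x := hx
    have e1 : x ^ (2:ℝ) = x ^ 2 := by
      rw [← Real.rpow_natCast x 2]; norm_num
    have e2 : (x ^ 2 : ℝ) ^ ((((K:ℝ)+1)/2) - 1) = x ^ ((K:ℝ)-1) := by
      rw [← Real.rpow_natCast x 2, ← Real.rpow_mul hx0.le]
      congr 1
      push_cast
      ring
    have e3 : x ^ ((2:ℝ)-1) = x := by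
      norm_num
    have e4 : x * x ^ ((K:ℝ)-1) = x ^ K := by
      rw [Real.rpow_sub hx0, Real.rpow_one, Real.rpow_natCast]
      field_simp
    simp only [hg, smul_eq_mul]
    rw [e1, e2, e3]
    have : 2 * x * (x ^ ((K:ℝ) - 1) * Real.exp (-(a * x ^ 2)))
        = 2 * ((x * x ^ ((K:ℝ)-1)) * Real.exp (-(a * x ^ 2))) := by ring
    rw [this, e4, neg_mul]
  rw [congr1, integral_const_mul] at key
  linarith

/-- `(3/2)_m * 4^m * m! = (2m+1)!`. -/
lemma poch_half (m : ℕ) :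
    (ascPochhammer ℝ m).eval (3/2 : ℝ) * 4 ^ m * (Nat.factorial m : ℝ)
      = (Nat.factorial (2*m+1) : ℝ) := by
  induction m with
  | zero => simp [Nat.factorial]
  | succ m ih =>
    rw [ascPochhammer_succ_eval]
    have h1 : 2*(m+1)+1 = (2*m+1) + 1 + 1 := by ring
    rw [h1, Nat.factorial_succ ((2*m+1)+1), Nat.factorial_succ (2*m+1), Nat.factorial_succ m]
    push_cast
    push_cast at ih
    rw [← ih]
    ring

lemma poch_half_pos (m : ℕ) : 0 < (ascPochhammer ℝ m).eval (3/2 : ℝ) := by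
  have h := poch_half m
  have h4 : (0:ℝ) < 4 ^ m := by positivity
  have hf : (0:ℝ) < (Nat.factorial m : ℝ) := by exact_mod_cast Nat.factorial_pos m
  have hf2 : (0:ℝ) < (Nat.factorial (2*m+1) : ℝ) := by exact_mod_cast Nat.factorial_pos _
  have h5 : 0 < (ascPochhammer ℝ m).eval (3/2 : ℝ) * (4 ^ m * (Nat.factorial m : ℝ)) := by
    rw [← mul_assoc, h]; exact hf2
  rcases mul_pos_iff.mp h5 with ⟨h', _⟩ | ⟨_, h''⟩
  · exact h'
  · linarith [mul_pos h4 hf]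

/-- `Γ(c+m) = Γ(c) * (c)_m` for `c > 0`. -/
lemma gamma_poch {c : ℝ} (hc : 0 < c) (m : ℕ) :
    Real.Gamma (c + m) = Real.Gamma c * (ascPochhammer ℝ m).eval c := by
  induction m with
  | zero => simp
  | succ m ih =>
    have hne : c + m ≠ 0 := by positivity
    have h : c + ((m+1 : ℕ) : ℝ) = (c + m) + 1 := by push_cast; ring
    rw [h, Real.Gamma_add_one hne, ih, ascPochhammer_succ_eval]
    ring

/-- The confluent hypergeometric function of the first kind,
`₁F₁(a, b, z) = ∑_{k≥0} (a)_k z^k / ((b)_k k!)`. -/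
noncomputable def hyp1F1 (a b z : ℝ) : ℝ :=
  ∑' k : ℕ, ((ascPochhammer ℝ k).eval a * z ^ k) /
    ((ascPochhammer ℝ k).eval b * (Nat.factorial k))

theorem stmt2 (a b : ℝ) (ha : 0 < a) (n : ℕ) (hn : Odd n) :
    ∫ x : ℝ, |x| * x ^ n * Real.exp (-a * x ^ 2 + 2 * b * x)
      = 2 * b * Real.rpow a (-(((n : ℝ) + 3) / 2)) * Real.Gamma (((n : ℝ) + 3) / 2) *
        hyp1F1 (((n : ℝ) + 3) / 2) (3 / 2) (b ^ 2 / a) := by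
  set c : ℝ := ((n : ℝ) + 3) / 2 with hcdef
  have hc : 0 < c := by positivity
  set f : ℝ → ℝ := fun x => |x| * x ^ n * Real.exp (-a * x ^ 2 + 2 * b * x) with hf
  set g : ℕ → ℝ → ℝ := fun m x =>
    (2 * (2*b) ^ (2*m+1) / (Nat.factorial (2*m+1) : ℝ)) *
      (x ^ (n+2*m+2) * Real.exp (-a * x ^ 2)) with hg
  -- integrability of f
  have hfint : Integrable f := by
    have hbase : Integrable (fun x : ℝ => x ^ (n+1) * Real.exp (-(a/2) * x ^ 2)) := by
      have h := integrable_rpow_mul_exp_neg_mul_sq (show (0:ℝ) < a/2 by positivity)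
        (show (-1:ℝ) < ((n+1:ℕ):ℝ) from lt_of_lt_of_le (by norm_num) (Nat.cast_nonneg _))
      simpa only [Real.rpow_natCast] using h
    refine Integrable.mono' (hbase.const_mul (Real.exp (2*b^2/a))) ?_ ?_
    · apply Continuous.aestronglyMeasurable; fun_prop
    · refine Filter.Eventually.of_forall (fun x => ?_)
      have h1 : |f x| = x ^ (n+1) * Real.exp (-a * x ^ 2 + 2 * b * x) := by
        rw [hf]
        simp only [abs_mul, abs_abs, abs_pow, Real.abs_exp]
        rw [← pow_succ']
        rw [Even.pow_abs (by simpa using hn.add_one)]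
      have h2 : -a * x ^ 2 + 2 * b * x ≤ 2*b^2/a + (-(a/2) * x ^ 2) := by
        rw [div_add' _ _ _ ha.ne', le_div_iff₀ ha]
        nlinarith [sq_nonneg (a*x - 2*b)]
      rw [Real.norm_eq_abs, h1]
      have hx1 : (0:ℝ) ≤ x ^ (n+1) := by
        rw [← Even.pow_abs (by simpa using hn.add_one)]; positivity
      calc x ^ (n+1) * Real.exp (-a * x ^ 2 + 2 * b * x)
          ≤ x ^ (n+1) * (Real.exp (2*b^2/a) * Real.exp (-(a/2) * x ^ 2)) := by
            rw [← Real.exp_add]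
            exact mul_le_mul_of_nonneg_left (Real.exp_le_exp.mpr h2) hx1
        _ = Real.exp (2*b^2/a) * (x ^ (n+1) * Real.exp (-(a/2) * x ^ 2)) := by ring
  -- integrability of each g m on Ioi 0
  have hgint : ∀ m : ℕ, IntegrableOn (g m) (Ioi (0:ℝ)) := by
    intro m
    have hbase : IntegrableOn (fun x : ℝ => x ^ (n+2*m+2) * Real.exp (-a * x ^ 2)) (Ioi 0) := by
      have h := integrableOn_rpow_mul_exp_neg_mul_sq ha
        (show (-1:ℝ) < ((n+2*m+2:ℕ):ℝ) from lt_of_lt_of_le (by norm_num) (Nat.cast_nonneg _))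
      simpa only [Real.rpow_natCast] using h
    exact hbase.const_mul _
  -- pointwise series
  have hsum : ∀ x : ℝ, HasSum (fun m => g m x)
      (x ^ (n+1) * Real.exp (-a * x ^ 2) * (Real.exp (2*b*x) - Real.exp (-(2*b*x)))) := by
    intro x
    have h := (Real.hasSum_sinh (2*b*x)).mul_left (2 * x ^ (n+1) * Real.exp (-a * x ^ 2))
    have heq : (fun m => 2 * x ^ (n+1) * Real.exp (-a * x ^ 2) *
        ((2*b*x) ^ (2*m+1) / ((Nat.factorial (2*m+1)):ℝ))) = fun m => g m x := by
      funext m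
      rw [hg]
      simp only
      rw [show n+2*m+2 = (n+1)+(2*m+1) from by ring, pow_add, mul_pow]
      ring
    rw [heq] at h
    have : 2 * x ^ (n+1) * Real.exp (-a * x ^ 2) * Real.sinh (2*b*x)
        = x ^ (n+1) * Real.exp (-a * x ^ 2) * (Real.exp (2*b*x) - Real.exp (-(2*b*x))) := by
      rw [Real.sinh_eq]; ring
    rwa [this] at h
  -- value of each integral
  have hval : ∀ m : ℕ, ∫ x in Ioi (0:ℝ), g m x
      = (2 * (2*b) ^ (2*m+1) / (Nat.factorial (2*m+1) : ℝ)) *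
        ((1/a) ^ (c + m) * Real.Gamma (c + m) / 2) := by
    intro m
    rw [hg]
    simp only
    rw [integral_const_mul, gauss_moment ha (n+2*m+2),
      show (((n+2*m+2:ℕ):ℝ)+1)/2 = c + m from by push_cast; rw [hcdef]; ring]
  -- norm integrals
  have hnorm : ∀ m : ℕ, (∫ x in Ioi (0:ℝ), ‖g m x‖)
      = (2 * (2*|b|) ^ (2*m+1) / (Nat.factorial (2*m+1) : ℝ)) *
        ((1/a) ^ (c + m) * Real.Gamma (c + m) / 2) := by
    intro m
    have h1 : ∀ x ∈ Ioi (0:ℝ), ‖g m x‖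
        = (2 * (2*|b|) ^ (2*m+1) / (Nat.factorial (2*m+1) : ℝ)) *
          (x ^ (n+2*m+2) * Real.exp (-a * x ^ 2)) := by
      intro x hx
      have hx0 : (0:ℝ) < x := hx
      rw [Real.norm_eq_abs, hg]
      simp only
      rw [abs_mul, abs_div, abs_mul, abs_pow, abs_mul, abs_mul, abs_pow, Real.abs_exp,
        abs_of_pos hx0, Nat.abs_cast]
      norm_num
    rw [setIntegral_congr_fun measurableSet_Ioi h1, integral_const_mul,
      gauss_moment ha (n+2*m+2),
      show (((n+2*m+2:ℕ):ℝ)+1)/2 = c + m from by push_cast; rw [hcdef]; ring]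
  -- summability of the norm integrals
  set S : ℕ → ℝ := fun m => (2 * (2*|b|) ^ (2*m+1) / (Nat.factorial (2*m+1) : ℝ)) *
        ((1/a) ^ (c + m) * Real.Gamma (c + m) / 2) with hS
  have hGpos : ∀ m : ℕ, 0 < Real.Gamma (c + m) := fun m =>
    Real.Gamma_pos_of_pos (by positivity)
  have hSpos : ∀ m : ℕ, 0 ≤ S m := by
    intro m
    rw [hS]
    have := (hGpos m).le
    have h2 : (0:ℝ) ≤ (1/a) ^ (c + (m:ℝ)) := Real.rpow_nonneg (by positivity) _
    positivity
  have hratio : ∀ m : ℕ, S (m+1) = S m * (4*b^2/a * (c+m) / ((2*(m:ℝ)+2)*(2*(m:ℝ)+3))) := by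
    intro m
    rw [hS]
    simp only
    have e1 : (2*|b|) ^ (2*(m+1)+1) = (2*|b|) ^ (2*m+1) * (4*b^2) := by
      rw [show 2*(m+1)+1 = (2*m+1)+2 from by ring, pow_add]
      have : (2*|b|)^2 = 4*b^2 := by
        rw [mul_pow, sq_abs]; norm_num
      rw [this]
    have e2 : ((Nat.factorial (2*(m+1)+1) : ℕ) : ℝ)
        = ((Nat.factorial (2*m+1) : ℕ) : ℝ) * ((2*(m:ℝ)+2)*(2*(m:ℝ)+3)) := by
      rw [show 2*(m+1)+1 = ((2*m+1)+1)+1 from by ring, Nat.factorial_succ, Nat.factorial_succ]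
      push_cast
      ring
    have e3 : (1/a) ^ (c + ((m+1:ℕ):ℝ)) = (1/a) ^ (c + (m:ℝ)) * (1/a) := by
      rw [show c + ((m+1:ℕ):ℝ) = (c + (m:ℝ)) + 1 from by push_cast; ring,
        Real.rpow_add (by positivity), Real.rpow_one]
    have e4 : Real.Gamma (c + ((m+1:ℕ):ℝ)) = (c + (m:ℝ)) * Real.Gamma (c + (m:ℝ)) := by
      rw [show c + ((m+1:ℕ):ℝ) = (c + (m:ℝ)) + 1 from by push_cast; ring,
        Real.Gamma_add_one (by positivity)]
    rw [e1, e2, e3, e4]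
    have hfne : ((Nat.factorial (2*m+1) : ℕ) : ℝ) ≠ 0 := by
      exact_mod_cast (Nat.factorial_pos _).ne'
    have hd1 : (2*(m:ℝ)+2) ≠ 0 := by positivity
    have hd2 : (2*(m:ℝ)+3) ≠ 0 := by positivity
    field_simp
  have hsummS : Summable S := by
    apply summable_of_ratio_norm_eventually_le (r := 1/2) (by norm_num)
    obtain ⟨M, hM⟩ := exists_nat_gt (4*b^2*(c+1)/a)
    filter_upwards [eventually_ge_atTop M] with m hm
    rw [Real.norm_eq_abs, Real.norm_eq_abs, abs_of_nonneg (hSpos _), abs_of_nonneg (hSpos _),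
      hratio m]
    have hmR : (M:ℝ) ≤ (m:ℝ) := by exact_mod_cast hm
    have h1 : 4*b^2*(c+1) < a*(m:ℝ) := by
      rw [div_lt_iff₀ ha] at hM
      calc 4*b^2*(c+1) < (M:ℝ) * a := hM
        _ ≤ (m:ℝ) * a := by nlinarith [ha]
        _ = a*(m:ℝ) := by ring
    have hq : 4*b^2/a * (c+(m:ℝ)) / ((2*(m:ℝ)+2)*(2*(m:ℝ)+3)) ≤ 1/2 := by
      rw [div_le_iff₀ (by positivity), div_mul_eq_mul_div, div_le_iff₀ ha]
      have h2 : c + (m:ℝ) ≤ (c+1)*((m:ℝ)+1) := by nlinarith [hc, Nat.cast_nonneg (α:=ℝ) m]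
      have h3 : 4*b^2*(c+(m:ℝ)) ≤ 4*b^2*((c+1)*((m:ℝ)+1)) :=
        mul_le_mul_of_nonneg_left h2 (by positivity)
      have h4 : 4*b^2*((c+1)*((m:ℝ)+1)) < a*(m:ℝ)*((m:ℝ)+1) := by
        nlinarith [h1, Nat.cast_nonneg (α:=ℝ) m]
      nlinarith [Nat.cast_nonneg (α:=ℝ) m, ha]
    calc S m * (4*b^2/a * (c+(m:ℝ)) / ((2*(m:ℝ)+2)*(2*(m:ℝ)+3)))
        ≤ S m * (1/2) := mul_le_mul_of_nonneg_left hq (hSpos m)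
      _ = 1/2 * S m := by ring
  have hsummInt : Summable (fun m : ℕ => ∫ x in Ioi (0:ℝ), ‖g m x‖) := by
    have : (fun m : ℕ => ∫ x in Ioi (0:ℝ), ‖g m x‖) = S := funext hnorm
    rw [this]; exact hsummS
  -- reduce the integral over ℝ to the series
  have hnegInt : IntegrableOn (fun x => f (-x)) (Ioi (0:ℝ)) := by
    have h := (Measure.measurePreserving_neg (volume : Measure ℝ)).integrableOn_comp_preimage
      (Homeomorph.neg ℝ).measurableEmbedding (f := f) (s := Iic 0)
    have h2 : IntegrableOn (f ∘ Neg.neg) (Neg.neg ⁻¹' (Iic (0:ℝ))) := h.mpr hfint.integrableOn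
    have h3 : (Neg.neg ⁻¹' (Iic (0:ℝ))) = Ici (0:ℝ) := by
      ext y; simp [neg_nonpos]
    rw [h3] at h2
    exact h2.mono_set Ioi_subset_Ici_self
  have hpt : ∀ x ∈ Ioi (0:ℝ), f (-x) + f x = ∑' m, g m x := by
    intro x hx
    have hx0 : (0:ℝ) < x := hx
    rw [(hsum x).tsum_eq, hf]
    simp only
    rw [abs_neg, abs_of_pos hx0, Odd.neg_pow hn,
      show -a*(-x)^2 + 2*b*(-x) = -a*x^2 + -(2*b*x) from by ring,
      Real.exp_add, Real.exp_add, pow_succ]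
    ring
  have key : (∫ x : ℝ, f x) = ∑' m, ∫ x in Ioi (0:ℝ), g m x := by
    rw [← intervalIntegral.integral_Iic_add_Ioi (b := (0:ℝ)) hfint.integrableOn hfint.integrableOn]
    have hcn := integral_comp_neg_Ioi (0:ℝ) f
    rw [neg_zero] at hcn
    rw [← hcn, ← integral_add hnegInt hfint.integrableOn,
      setIntegral_congr_fun measurableSet_Ioi hpt]
    exact (integral_tsum_of_summable_integral_norm (fun m => hgint m) hsummInt).symm
  -- termwise identity
  have hterm : ∀ m : ℕ, (2 * (2*b) ^ (2*m+1) / (Nat.factorial (2*m+1) : ℝ)) *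
        ((1/a) ^ (c + m) * Real.Gamma (c + m) / 2)
      = (2 * b * a ^ (-c) * Real.Gamma c) *
        (((ascPochhammer ℝ m).eval c * (b^2/a)^m) /
          ((ascPochhammer ℝ m).eval (3/2:ℝ) * (Nat.factorial m : ℝ))) := by
    intro m
    rw [gamma_poch hc m]
    have e1 : (1/a) ^ (c + (m:ℝ)) = a^(-c) * (1/a^m) := by
      rw [Real.rpow_add (by positivity : (0:ℝ) < 1/a), Real.rpow_natCast]
      congr 1
      · rw [one_div, Real.inv_rpow ha.le, ← Real.rpow_neg ha.le]
      · rw [div_pow, one_pow]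
    have e2 : (2*b)^(2*m+1) = 2 * 4^m * (b * (b^2)^m) := by
      rw [mul_pow, pow_succ, pow_succ, pow_mul, pow_mul]
      norm_num
      ring
    have e3 : (b^2/a)^m = (b^2)^m / a^m := div_pow _ _ _
    rw [e1, e2, e3, ← poch_half m]
    have hPne : (ascPochhammer ℝ m).eval (3/2:ℝ) ≠ 0 := (poch_half_pos m).ne'
    have hfne : (Nat.factorial m : ℝ) ≠ 0 := by exact_mod_cast (Nat.factorial_pos m).ne'
    have hane : a ≠ 0 := ha.ne'
    have hapne : (a:ℝ)^m ≠ 0 := pow_ne_zero _ hane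
    field_simp
  -- conclusion
  calc (∫ x : ℝ, f x) = ∑' m, ∫ x in Ioi (0:ℝ), g m x := key
    _ = ∑' m : ℕ, (2 * b * a ^ (-c) * Real.Gamma c) *
        (((ascPochhammer ℝ m).eval c * (b^2/a)^m) /
          ((ascPochhammer ℝ m).eval (3/2:ℝ) * (Nat.factorial m : ℝ))) :=
        tsum_congr (fun m => by rw [hval m, hterm m])
    _ = 2 * b * Real.rpow a (-c) * Real.Gamma c * hyp1F1 c (3/2) (b^2/a) := by
        rw [tsum_mul_left, hyp1F1]
        rfl
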